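/- arXiv:2501.17383 — 3 statements merged into one kernel-verified Lean document; each statement's English description precedes it below -/
import Mathlib

section
/- If a monomial ideal J in the polynomial ring k[x_1,...,x_n] is weakly reverse lexicographic (i.e., for every monomial m among the minimal generators of J, every monomial m' with deg(m') = deg(m) and m' greater than or equal to m in the degree reverse lexicographic order also lies in J), then J is Borel-fixed, i.e., for all i < j, if a minimal generator m of J is divisible by x_j^t but not x_j^{t+1}, then (x_i/x_j)^s · m ∈ J for all s with binom(t,s) nonzero mod char(k). -/
open MvPolynomial

def degOf {n : ℕ} (e : Fin n →₀ ℕ) : ℕ := ∑ i, e i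

def IsMonomialIdeal {n : ℕ} {k : Type*} [Field k] (J : Ideal (MvPolynomial (Fin n) k)) : Prop :=
  ∃ E : Set (Fin n →₀ ℕ), J = Ideal.span ((fun e => (monomial e (1 : k))) '' E)

def MinGen {n : ℕ} {k : Type*} [Field k] (J : Ideal (MvPolynomial (Fin n) k))
    (e : Fin n →₀ ℕ) : Prop :=
  monomial e (1 : k) ∈ J ∧ ∀ e' : Fin n →₀ ℕ, e' ≤ e → e' ≠ e → monomial e' (1 : k) ∉ J

/-- `a ⪯ b` in the lexicographic order (`x_1 > x_2 > ⋯ > x_n`). -/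
def lexLE {n : ℕ} (a b : Fin n →₀ ℕ) : Prop :=
  a = b ∨ ∃ i : Fin n, a i < b i ∧ ∀ j : Fin n, j < i → a j = b j

def lexLT {n : ℕ} (a b : Fin n →₀ ℕ) : Prop :=
  ∃ i : Fin n, a i < b i ∧ ∀ j : Fin n, j < i → a j = b j

/-- `a ⪯ b` in the degree reverse lexicographic order (`x_1 > x_2 > ⋯ > x_n`). -/
def drlLE {n : ℕ} (a b : Fin n →₀ ℕ) : Prop :=
  a = b ∨ degOf a < degOf b ∨
    (degOf a = degOf b ∧ ∃ i : Fin n, b i < a i ∧ ∀ j : Fin n, i < j → a j = b j)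

def IsLeadExp {n : ℕ} {k : Type*} [Field k] (le : (Fin n →₀ ℕ) → (Fin n →₀ ℕ) → Prop)
    (f : MvPolynomial (Fin n) k) (e : Fin n →₀ ℕ) : Prop :=
  e ∈ f.support ∧ ∀ e' ∈ f.support, le e' e

noncomputable def initialIdeal {n : ℕ} {k : Type*} [Field k] (le : (Fin n →₀ ℕ) → (Fin n →₀ ℕ) → Prop)
    (I : Ideal (MvPolynomial (Fin n) k)) : Ideal (MvPolynomial (Fin n) k) :=
  Ideal.span {p | ∃ f ∈ I, ∃ e, IsLeadExp le f e ∧ p = monomial e (1 : k)}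

noncomputable def HF {n : ℕ} {k : Type*} [Field k]
    (I : Ideal (MvPolynomial (Fin n) k)) (d : ℕ) : ℕ :=
  Module.finrank k
    ((homogeneousSubmodule (Fin n) k d) ⧸
      (Submodule.comap (homogeneousSubmodule (Fin n) k d).subtype
        (Submodule.restrictScalars k I)))

def IsLexsegment {n : ℕ} {k : Type*} [Field k] (J : Ideal (MvPolynomial (Fin n) k)) : Prop :=
  ∀ e : Fin n →₀ ℕ, monomial e (1 : k) ∈ J →
    ∀ e' : Fin n →₀ ℕ, degOf e' = degOf e → lexLE e e' → monomial e' (1 : k) ∈ J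

def IsHomogIdeal {n : ℕ} {k : Type*} [Field k] (I : Ideal (MvPolynomial (Fin n) k)) : Prop :=
  ∃ G : Set (MvPolynomial (Fin n) k), (∀ f ∈ G, ∃ d, f.IsHomogeneous d) ∧ I = Ideal.span G

noncomputable def matAction {n : ℕ} {k : Type*} [Field k] (α : Matrix (Fin n) (Fin n) k) :
    MvPolynomial (Fin n) k →ₐ[k] MvPolynomial (Fin n) k :=
  MvPolynomial.aeval (fun j => ∑ i, α i j • MvPolynomial.X i)

def BorelFixed {n : ℕ} {k : Type*} [Field k] (J : Ideal (MvPolynomial (Fin n) k)) : Prop :=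
  ∀ α : Matrix (Fin n) (Fin n) k, IsUnit α.det → (∀ i j : Fin n, j < i → α i j = 0) →
    Ideal.map (matAction α) J = J

lemma degOf_add' {n : ℕ} (a b : Fin n →₀ ℕ) : degOf (a + b) = degOf a + degOf b := by
  simp [degOf, Finsupp.add_apply, Finset.sum_add_distrib]

lemma degOf_single' {n : ℕ} (i : Fin n) (s : ℕ) : degOf (Finsupp.single i s) = s := by
  simp [degOf, Finsupp.single_apply]

theorem stmt0 {n : ℕ} {k : Type*} [Field k] (J : Ideal (MvPolynomial (Fin n) k))
    (hmon : IsMonomialIdeal J)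
    (hwrl : ∀ e : Fin n →₀ ℕ, MinGen J e →
      ∀ e' : Fin n →₀ ℕ, degOf e' = degOf e → drlLE e e' → monomial e' (1 : k) ∈ J) :
    ∀ i j : Fin n, i < j → ∀ e : Fin n →₀ ℕ, MinGen J e →
      ∀ s : ℕ, ((Nat.choose (e j) s : k) ≠ 0) →
        monomial (e + Finsupp.single i s - Finsupp.single j s) (1 : k) ∈ J := by
  intro i j hij e hMG s hs
  have hsle : s ≤ e j := by
    by_contra h
    push_neg at h
    exact hs (by rw [Nat.choose_eq_zero_of_lt h]; simp)
  rcases Nat.eq_zero_or_pos s with rfl | hspos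
  · simpa using hMG.1
  · have hij' : i ≠ j := ne_of_lt hij
    set e' := e + Finsupp.single i s - Finsupp.single j s with he'
    have hle : Finsupp.single j s ≤ e + Finsupp.single i s := by
      rw [Finsupp.le_def]
      intro ι
      by_cases h : ι = j
      · subst h
        simp [Finsupp.single_apply, hij', hsle]
      · simp [Finsupp.single_apply, Ne.symm h]
    have hcancel : e' + Finsupp.single j s = e + Finsupp.single i s :=
      tsub_add_cancel_of_le hle
    have hdeg : degOf e' = degOf e := by
      have := congrArg degOf hcancel
      rw [degOf_add', degOf_add', degOf_single', degOf_single'] at this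
      omega
    have he'j : e' j = e j - s := by
      simp [he', Finsupp.tsub_apply, Finsupp.add_apply, Finsupp.single_apply, hij']
    have hdrl : drlLE e e' := by
      refine Or.inr (Or.inr ⟨hdeg.symm, j, ?_, ?_⟩)
      · rw [he'j]
        exact Nat.sub_lt (lt_of_lt_of_le hspos hsle) hspos
      · intro j' hjj'
        have h1 : i ≠ j' := ne_of_lt (hij.trans hjj')
        have h2 : j ≠ j' := ne_of_lt hjj'
        simp [he', Finsupp.tsub_apply, Finsupp.add_apply, Finsupp.single_apply, h1, h2]
    exact hwrl e hMG e' hdeg hdrl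
end

section
/- For any homogeneous ideal I in k[x_1,...,x_n] and any monomial order ⪯, the Hilbert series of S/I equals the Hilbert series of S/in_⪯(I), where in_⪯(I) is the initial ideal of I with respect to ⪯. -/
set_option maxHeartbeats 1000000
set_option synthInstance.maxHeartbeats 400000


open MvPolynomial

attribute [local instance] MvPolynomial.gradedAlgebra

lemma aux_finrank {n : ℕ} {k : Type*} [Field k] (m : MonomialOrder (Fin n))
    (M : Submodule k (MvPolynomial (Fin n) k)) (L : Finset (Fin n →₀ ℕ))
    (hL : ∀ e, e ∈ L ↔ ∃ f ∈ M, (e ∈ f.support ∧ ∀ e' ∈ f.support, m.toSyn e' ≤ m.toSyn e)) :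
    Module.finrank k M = L.card := by
  classical
  have hchoice : ∀ e : L, ∃ f, f ∈ M ∧ (e : Fin n →₀ ℕ) ∈ f.support ∧
      ∀ e' ∈ f.support, m.toSyn e' ≤ m.toSyn (e : Fin n →₀ ℕ) := fun e => by
    simpa using (hL e).mp e.2
  choose g hgM hgmem hgle using hchoice
  have hind : LinearIndependent k g := by
    rw [linearIndependent_iff']
    intro s c hsum i hi
    by_contra hci
    set t := s.filter (fun j => c j ≠ 0) with ht
    have htne : t.Nonempty := ⟨i, Finset.mem_filter.mpr ⟨hi, hci⟩⟩
    obtain ⟨i0, hi0t, hmax⟩ := t.exists_max_image (fun j : L => m.toSyn (j : Fin n →₀ ℕ)) htne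
    have hi0s : i0 ∈ s := (Finset.filter_subset _ _) hi0t
    have hci0 : c i0 ≠ 0 := (Finset.mem_filter.mp hi0t).2
    have hcoeff := congrArg (MvPolynomial.coeff (i0 : Fin n →₀ ℕ)) hsum
    rw [MvPolynomial.coeff_sum] at hcoeff
    simp only [MvPolynomial.coeff_smul, smul_eq_mul, MvPolynomial.coeff_zero] at hcoeff
    rw [Finset.sum_eq_single i0] at hcoeff
    · exact mul_ne_zero hci0 (MvPolynomial.mem_support_iff.mp (hgmem i0)) hcoeff
    · intro j hj hji
      by_cases hcj : c j = 0
      · simp [hcj]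
      · have hjt : j ∈ t := Finset.mem_filter.mpr ⟨hj, hcj⟩
        by_cases hc0 : MvPolynomial.coeff (i0 : Fin n →₀ ℕ) (g j) = 0
        · simp [hc0]
        · exfalso
          have h1 : m.toSyn (i0 : Fin n →₀ ℕ) ≤ m.toSyn (j : Fin n →₀ ℕ) :=
            hgle j _ (MvPolynomial.mem_support_iff.mpr hc0)
          have h2 : m.toSyn (j : Fin n →₀ ℕ) ≤ m.toSyn (i0 : Fin n →₀ ℕ) := hmax j hjt
          exact hji (Subtype.ext (m.toSyn.injective (le_antisymm h2 h1)))
    · intro h; exact absurd hi0s h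
  have hspan_le : ∀ f ∈ M, f ∈ Submodule.span k (Set.range g) := by
    suffices H : ∀ s : m.syn, ∀ f, f ∈ M → f.support.sup m.toSyn = s →
        f ∈ Submodule.span k (Set.range g) by
      intro f hf; exact H _ f hf rfl
    intro s
    induction s using WellFoundedLT.induction with
    | _ s IH =>
      intro f hf hfs
      by_cases hf0 : f = 0
      · simp [hf0]
      have hne : f.support.Nonempty := Finset.nonempty_iff_ne_empty.mpr (by rwa [Ne, MvPolynomial.support_eq_empty])
      obtain ⟨e0, he0, hsup⟩ := Finset.exists_mem_eq_sup f.support hne m.toSyn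
      have hlead : ∀ e' ∈ f.support, m.toSyn e' ≤ m.toSyn e0 := by
        intro e' he'; rw [← hsup]; exact Finset.le_sup he'
      have he0L : e0 ∈ L := (hL e0).mpr ⟨f, hf, he0, hlead⟩
      set i0 : L := ⟨e0, he0L⟩ with hi0
      have hc : MvPolynomial.coeff e0 (g i0) ≠ 0 := MvPolynomial.mem_support_iff.mp (hgmem i0)
      set a := MvPolynomial.coeff e0 f / MvPolynomial.coeff e0 (g i0) with ha
      set f' := f - a • g i0 with hf'
      have hmem : f' ∈ M := Submodule.sub_mem _ hf (Submodule.smul_mem _ _ (hgM i0))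
      have hcoeff0 : MvPolynomial.coeff e0 f' = 0 := by
        simp only [hf', MvPolynomial.coeff_sub, MvPolynomial.coeff_smul, smul_eq_mul, ha]
        rw [div_mul_cancel₀ _ hc, sub_self]
      have hlt : ∀ e' ∈ f'.support, m.toSyn e' < m.toSyn e0 := by
        intro e' he'
        have h1 : e' ≠ e0 := by
          intro h; rw [h] at he'; exact (MvPolynomial.mem_support_iff.mp he') hcoeff0
        have h2 : m.toSyn e' ≤ m.toSyn e0 := by
          rcases Finset.mem_union.mp (MvPolynomial.support_sub _ _ _ he') with h | h
          · exact hlead e' h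
          · exact hgle i0 e' (MvPolynomial.support_smul h)
        exact lt_of_le_of_ne h2 (fun hh => h1 (m.toSyn.injective hh))
      have hgi0span : g i0 ∈ Submodule.span k (Set.range g) :=
        Submodule.subset_span ⟨i0, rfl⟩
      by_cases hf'0 : f' = 0
      · have : f = a • g i0 := by rwa [hf', sub_eq_zero] at hf'0
        rw [this]; exact Submodule.smul_mem _ _ hgi0span
      · have hne' : f'.support.Nonempty := Finset.nonempty_iff_ne_empty.mpr (by rwa [Ne, MvPolynomial.support_eq_empty])
        have hslt : f'.support.sup m.toSyn < s := by
          obtain ⟨e1, he1, hsup1⟩ := Finset.exists_mem_eq_sup f'.support hne' m.toSyn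
          rw [hsup1, ← hfs, hsup]
          exact hlt e1 he1
        have hspan' := IH _ hslt f' hmem rfl
        have : f = f' + a • g i0 := by rw [hf']; ring
        rw [this]
        exact Submodule.add_mem _ hspan' (Submodule.smul_mem _ _ hgi0span)
  have hspan : M = Submodule.span k (Set.range g) := by
    apply le_antisymm
    · exact hspan_le
    · rw [Submodule.span_le]; rintro _ ⟨i, rfl⟩; exact hgM i
  rw [hspan, finrank_span_eq_card hind, Fintype.card_coe]

theorem stmt2 {n : ℕ} {k : Type*} [Field k] (m : MonomialOrder (Fin n))
    (I : Ideal (MvPolynomial (Fin n) k)) (hI : IsHomogIdeal I) (d : ℕ) :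
    HF I d = HF (initialIdeal (fun a b => m.toSyn a ≤ m.toSyn b) I) d := by
  classical
  set le : (Fin n →₀ ℕ) → (Fin n →₀ ℕ) → Prop := fun a b => m.toSyn a ≤ m.toSyn b with hle
  obtain ⟨G, hGhom, hIG⟩ := hI
  have hIhom : Ideal.IsHomogeneous (homogeneousSubmodule (Fin n) k) I := by
    rw [hIG]
    exact Ideal.homogeneous_span _ _ (fun x hx => hGhom x hx)
  have hcomp : ∀ f ∈ I, ∀ j : ℕ, homogeneousComponent j f ∈ I := by
    intro f hf j
    have h2 : ((DirectSum.decompose (homogeneousSubmodule (Fin n) k) f) j : MvPolynomial (Fin n) k)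
        = homogeneousComponent j f := MvPolynomial.decomposition.decompose'_apply f j
    have := hIhom j hf
    rwa [h2] at this
  -- the set of all leading exponents of I
  set Lall : Set (Fin n →₀ ℕ) := {e | ∃ f ∈ I, IsLeadExp le f e} with hLall
  have hinit : initialIdeal le I = Ideal.span ((fun e => monomial e (1 : k)) '' Lall) := by
    unfold initialIdeal
    congr 1
    ext p
    constructor
    · rintro ⟨f, hf, e, hfe, rfl⟩; exact ⟨e, ⟨f, hf, hfe⟩, rfl⟩
    · rintro ⟨e, ⟨f, hf, hfe⟩, rfl⟩; exact ⟨f, hf, e, hfe, rfl⟩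
  -- Lall is closed under shifts
  have hshift : ∀ e ∈ Lall, ∀ a : Fin n →₀ ℕ, a + e ∈ Lall := by
    intro e he a
    obtain ⟨f, hf, hfe⟩ := he
    refine ⟨monomial a 1 * f, Ideal.mul_mem_left _ _ hf, ?_, ?_⟩
    · rw [MvPolynomial.mem_support_iff, MvPolynomial.coeff_monomial_mul, one_mul]
      exact MvPolynomial.mem_support_iff.mp hfe.1
    · intro e' he'
      have hsub := MvPolynomial.support_mul (monomial a (1:k)) f he'
      rw [MvPolynomial.support_monomial, if_neg (one_ne_zero)] at hsub
      rw [Finset.mem_add] at hsub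
      obtain ⟨b, hb, y, hy, hsum⟩ := hsub
      rw [Finset.mem_singleton] at hb
      rw [hb] at hsum
      show m.toSyn e' ≤ m.toSyn (a + e)
      rw [← hsum, map_add, map_add]
      exact add_le_add (le_refl _) (hfe.2 y hy)
  -- degree-d exponents
  set E : Finset (Fin n →₀ ℕ) := Finset.finsuppAntidiag (Finset.univ : Finset (Fin n)) d with hE
  have hmemE : ∀ e : Fin n →₀ ℕ, e ∈ E ↔ Finsupp.degree e = d := by
    intro e
    rw [hE, Finset.mem_finsuppAntidiag]
    constructor
    · rintro ⟨hsum, -⟩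
      rw [← hsum, Finsupp.degree]
      exact Finset.sum_subset (Finset.subset_univ _)
        (fun i _ hi => Finsupp.notMem_support_iff.mp hi)
    · intro hdeg
      refine ⟨?_, Finset.subset_univ _⟩
      rw [← hdeg, Finsupp.degree]
      exact (Finset.sum_subset (Finset.subset_univ _)
        (fun i _ hi => Finsupp.notMem_support_iff.mp hi)).symm
  have hhomdeg : ∀ (f : MvPolynomial (Fin n) k), f.IsHomogeneous d →
      ∀ e ∈ f.support, Finsupp.degree e = d := by
    intro f hf e he
    have := hf (MvPolynomial.mem_support_iff.mp he)
    rw [Finsupp.degree_eq_weight_one]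
    exact this
  set L : Finset (Fin n →₀ ℕ) := E.filter (fun e => e ∈ Lall) with hLdef
  set V : Submodule k (MvPolynomial (Fin n) k) := homogeneousSubmodule (Fin n) k d with hV
  -- characterization 1
  have hchar1 : ∀ e, e ∈ L ↔ ∃ f ∈ (Submodule.restrictScalars k I ⊓ V : Submodule k _),
      (e ∈ f.support ∧ ∀ e' ∈ f.support, m.toSyn e' ≤ m.toSyn e) := by
    intro e
    rw [hLdef, Finset.mem_filter]
    constructor
    · rintro ⟨heE, f, hfI, hfe, hflead⟩
      have hdeg : Finsupp.degree e = d := (hmemE e).mp heE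
      refine ⟨homogeneousComponent d f, ⟨hcomp f hfI d, homogeneousComponent_mem d f⟩, ?_, ?_⟩
      · rw [MvPolynomial.mem_support_iff, coeff_homogeneousComponent, if_pos hdeg]
        exact MvPolynomial.mem_support_iff.mp hfe
      · intro e' he'
        apply hflead
        rw [MvPolynomial.mem_support_iff] at he' ⊢
        rw [coeff_homogeneousComponent] at he'
        by_cases h : Finsupp.degree e' = d
        · rwa [if_pos h] at he'
        · rw [if_neg h] at he'; exact absurd rfl he'
    · rintro ⟨f, ⟨hfI, hfhom⟩, he, hlead⟩
      refine ⟨(hmemE e).mpr (hhomdeg f hfhom e he), f, hfI, he, hlead⟩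
  -- characterization 2
  have hchar2 : ∀ e, e ∈ L ↔
      ∃ f ∈ (Submodule.restrictScalars k (initialIdeal le I) ⊓ V : Submodule k _),
      (e ∈ f.support ∧ ∀ e' ∈ f.support, m.toSyn e' ≤ m.toSyn e) := by
    intro e
    rw [hLdef, Finset.mem_filter]
    constructor
    · rintro ⟨heE, heLall⟩
      have hdeg : Finsupp.degree e = d := (hmemE e).mp heE
      have hsupp : (monomial e (1:k)).support = {e} := by
        rw [MvPolynomial.support_monomial, if_neg one_ne_zero]
      refine ⟨monomial e (1:k), ⟨?_, isHomogeneous_monomial _ hdeg⟩, ?_, ?_⟩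
      · rw [hinit]
        exact Ideal.subset_span ⟨e, heLall, rfl⟩
      · rw [hsupp]; exact Finset.mem_singleton_self e
      · intro e' he'
        rw [hsupp, Finset.mem_singleton] at he'
        subst he'
        exact le_refl _
    · rintro ⟨f, ⟨hfin, hfhom⟩, he, hlead⟩
      refine ⟨(hmemE e).mpr (hhomdeg f hfhom e he), ?_⟩
      rw [hinit] at hfin
      have := MvPolynomial.mem_ideal_span_monomial_image.mp hfin e he
      obtain ⟨e', he'L, he'le⟩ := this
      have := hshift e' he'L (e - e')
      rwa [tsub_add_cancel_of_le he'le] at this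
  have h1 : Module.finrank k (Submodule.restrictScalars k I ⊓ V : Submodule k _) = L.card :=
    aux_finrank m _ L hchar1
  have h2 : Module.finrank k
      (Submodule.restrictScalars k (initialIdeal le I) ⊓ V : Submodule k _) = L.card :=
    aux_finrank m _ L hchar2
  -- finite dimensionality of V
  haveI hVfin : FiniteDimensional k V := by
    have hle' : V ≤ Submodule.span k ((fun e => monomial e (1:k)) '' (E : Set (Fin n →₀ ℕ))) := by
      intro f hf
      have hrepr : f = ∑ v ∈ f.support, (MvPolynomial.coeff v f) • monomial v (1:k) := by
        conv_lhs => rw [f.as_sum]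
        exact Finset.sum_congr rfl (fun v _ => by
          rw [MvPolynomial.smul_monomial, smul_eq_mul, mul_one])
      rw [hrepr]
      apply Submodule.sum_mem
      intro v hv
      exact Submodule.smul_mem _ _ (Submodule.subset_span
        ⟨v, (hmemE v).mpr (hhomdeg f hf v hv), rfl⟩)
    haveI := FiniteDimensional.span_of_finite k
      (E.finite_toSet.image (fun e => monomial e (1:k)))
    exact Submodule.finiteDimensional_of_le hle'
  -- HF computation
  have key : ∀ J : Ideal (MvPolynomial (Fin n) k),
      HF J d + Module.finrank k (Submodule.restrictScalars k J ⊓ V : Submodule k _)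
        = Module.finrank k V := by
    intro J
    have heq : Submodule.comap V.subtype (Submodule.restrictScalars k J)
        = Submodule.comap V.subtype (Submodule.restrictScalars k J ⊓ V) := by
      rw [Submodule.comap_inf, Submodule.comap_subtype_self, inf_top_eq]
    have e := Submodule.comapSubtypeEquivOfLe
      (inf_le_right : Submodule.restrictScalars k J ⊓ V ≤ V)
    have h3 := Submodule.finrank_quotient_add_finrank
      (Submodule.comap V.subtype (Submodule.restrictScalars k J ⊓ V))
    have h4 : Module.finrank k
        (Submodule.comap V.subtype (Submodule.restrictScalars k J ⊓ V))
        = Module.finrank k (Submodule.restrictScalars k J ⊓ V : Submodule k _) :=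
      e.finrank_eq
    unfold HF
    rw [heq, ← h4]
    exact h3
  have k1 := key I
  have k2 := key (initialIdeal le I)
  rw [h1] at k1
  rw [h2] at k2
  omega
end

section
/- Fix n, s, d_1,...,d_s and an infinite field k, and let V ⊆ A^N be the Zariski open dense set on which in_lex(I_a) is a constant monomial ideal J. If there exists a point a in the generic-Hilbert-series set U such that in_lex(I_a) is a lexsegment ideal, then J itself is a lexsegment ideal. -/
open MvPolynomial

def Idx (n s : ℕ) (d : Fin s → ℕ) : Type := (i : Fin s) × {e : Fin n →₀ ℕ // degOf e = d i}

def CoeffCond {n s : ℕ} {k : Type*} [Field k] (d : Fin s → ℕ) (a : Idx n s d → k)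
    (f : Fin s → MvPolynomial (Fin n) k) : Prop :=
  ∀ i : Fin s,
    (∀ e : {e : Fin n →₀ ℕ // degOf e = d i}, MvPolynomial.coeff e.1 (f i) = a ⟨i, e⟩) ∧
    ∀ e : Fin n →₀ ℕ, degOf e ≠ d i → MvPolynomial.coeff e (f i) = 0

namespace StmtAux

variable {k : Type*} [Field k] {n : ℕ}

theorem lexLT_of_ne {a b : Fin n →₀ ℕ} (h : a ≠ b) : lexLT a b ∨ lexLT b a := by
  classical
  have hne : ∃ i, a i ≠ b i := by
    by_contra h'
    push_neg at h'
    exact h (Finsupp.ext h')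
  set S : Finset (Fin n) := Finset.univ.filter (fun i => a i ≠ b i) with hS
  have hSne : S.Nonempty := ⟨hne.choose, by simp [hS, hne.choose_spec]⟩
  obtain ⟨i0, hi0S, hi0min⟩ := Finset.exists_min_image S id hSne
  have hi0 : a i0 ≠ b i0 := by
    rw [hS, Finset.mem_filter] at hi0S
    exact hi0S.2
  have hbefore : ∀ j, j < i0 → a j = b j := by
    intro j hj
    by_contra hne'
    exact absurd (hi0min j (by simp [hS, hne'])) (not_le.mpr hj)
  rcases lt_or_gt_of_ne hi0 with h' | h'
  · exact Or.inl ⟨i0, h', hbefore⟩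
  · exact Or.inr ⟨i0, h', fun j hj => (hbefore j hj).symm⟩

theorem lexLT_asymm {a b : Fin n →₀ ℕ} (h1 : lexLT a b) (h2 : lexLT b a) : False := by
  obtain ⟨i, hi, hb⟩ := h1
  obtain ⟨i', hi', hb'⟩ := h2
  rcases lt_trichotomy i i' with h | h | h
  · have := hb' i h; omega
  · subst h; omega
  · have := hb i' h; omega

theorem lexLT_trans {a b c : Fin n →₀ ℕ} (h1 : lexLT a b) (h2 : lexLT b c) : lexLT a c := by
  obtain ⟨i, hi, hb⟩ := h1
  obtain ⟨i', hi', hb'⟩ := h2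
  rcases lt_trichotomy i i' with h | h | h
  · have hbc := hb' i h
    exact ⟨i, by omega, fun j hj => (hb j hj).trans (hb' j (hj.trans h))⟩
  · subst h
    exact ⟨i, by omega, fun j hj => (hb j hj).trans (hb' j hj)⟩
  · have hab := hb i' h
    exact ⟨i', by omega, fun j hj => (hb j (hj.trans h)).trans (hb' j hj)⟩

theorem lexLE_refl (a : Fin n →₀ ℕ) : lexLE a a := Or.inl rfl

theorem lexLE_total (a b : Fin n →₀ ℕ) : lexLE a b ∨ lexLE b a := by
  by_cases h : a = b
  · exact Or.inl (Or.inl h)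
  · rcases lexLT_of_ne h with h' | h'
    · exact Or.inl (Or.inr h')
    · exact Or.inr (Or.inr h')

theorem lexLE_antisymm {a b : Fin n →₀ ℕ} (h1 : lexLE a b) (h2 : lexLE b a) : a = b := by
  rcases h1 with rfl | h1
  · rfl
  rcases h2 with rfl | h2
  · rfl
  exact (lexLT_asymm h1 h2).elim

theorem lexLE_trans {a b c : Fin n →₀ ℕ} (h1 : lexLE a b) (h2 : lexLE b c) : lexLE a c := by
  rcases h1 with rfl | h1
  · exact h2
  rcases h2 with rfl | h2
  · exact Or.inr h1
  exact Or.inr (lexLT_trans h1 h2)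

theorem lexLE_add_right {a b : Fin n →₀ ℕ} (h : lexLE a b) (u : Fin n →₀ ℕ) :
    lexLE (a + u) (b + u) := by
  rcases h with rfl | ⟨i, hi, hb⟩
  · exact Or.inl rfl
  · refine Or.inr ⟨i, ?_, fun j hj => ?_⟩
    · simp only [Finsupp.add_apply]; omega
    · simp only [Finsupp.add_apply, hb j hj]

theorem exists_lex_max : ∀ (s : Finset (Fin n →₀ ℕ)), s.Nonempty →
    ∃ e ∈ s, ∀ e' ∈ s, lexLE e' e := by
  intro s
  induction s using Finset.induction_on with
  | empty => intro h; exact absurd h (by simp)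
  | @insert a t _ ih =>
    intro _
    by_cases ht : t.Nonempty
    · obtain ⟨e, he, hmax⟩ := ih ht
      rcases lexLE_total a e with h | h
      · refine ⟨e, Finset.mem_insert_of_mem he, ?_⟩
        intro e' he'
        rcases Finset.mem_insert.mp he' with rfl | he''
        · exact h
        · exact hmax e' he''
      · refine ⟨a, Finset.mem_insert_self a t, ?_⟩
        intro e' he'
        rcases Finset.mem_insert.mp he' with rfl | he''
        · exact lexLE_refl e'
        · exact lexLE_trans (hmax e' he'') h
    · rw [Finset.not_nonempty_iff_eq_empty] at ht
      subst ht
      refine ⟨a, Finset.mem_insert_self a _, ?_⟩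
      intro e' he'
      rcases Finset.mem_insert.mp he' with rfl | he''
      · exact lexLE_refl e'
      · exact absurd he'' (by simp)

theorem degOf_eq_degree (e : Fin n →₀ ℕ) : degOf e = Finsupp.degree e := by
  unfold degOf Finsupp.degree
  exact (Finset.sum_subset (Finset.subset_univ _)
    (fun i _ hi => Finsupp.notMem_support_iff.mp hi)).symm

theorem degOf_eq_weight (e : Fin n →₀ ℕ) : degOf e = Finsupp.weight 1 e := by
  rw [degOf_eq_degree, Finsupp.degree_eq_weight_one]
  rfl

theorem mem_homog_iff {p : MvPolynomial (Fin n) k} {m : ℕ} :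
    p ∈ homogeneousSubmodule (Fin n) k m ↔ ∀ w, coeff w p ≠ 0 → degOf w = m := by
  rw [mem_homogeneousSubmodule]
  constructor
  · intro h w hw
    rw [degOf_eq_weight]
    exact h hw
  · intro h w hw
    rw [← degOf_eq_weight w]
    exact h w hw

theorem degOf_add (a b : Fin n →₀ ℕ) : degOf (a + b) = degOf a + degOf b := by
  unfold degOf
  rw [← Finset.sum_add_distrib]
  exact Finset.sum_congr rfl fun i _ => Finsupp.add_apply a b i

def Mon (n : ℕ) (m : ℕ) : Finset (Fin n →₀ ℕ) := Finset.finsuppAntidiag Finset.univ m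

theorem mem_Mon {m : ℕ} {e : Fin n →₀ ℕ} : e ∈ Mon n m ↔ degOf e = m := by
  simp [Mon, Finset.mem_finsuppAntidiag, degOf]

instance homog_fd (m : ℕ) : FiniteDimensional k ↥(homogeneousSubmodule (Fin n) k m) := by
  have hle : homogeneousSubmodule (Fin n) k m ≤
      Submodule.span k ((fun e => monomial e (1 : k)) '' ((Mon n m : Finset (Fin n →₀ ℕ)) : Set _)) := by
    intro p hp
    rw [p.as_sum]
    refine Submodule.sum_mem _ fun v hv => ?_
    have h1 : monomial v (coeff v p) = (coeff v p) • monomial v (1 : k) := by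
      rw [smul_monomial, smul_eq_mul, mul_one]
    rw [h1]
    exact Submodule.smul_mem _ _ (Submodule.subset_span
      ⟨v, by simpa [mem_Mon] using mem_homog_iff.mp hp v (mem_support_iff.mp hv), rfl⟩)
  haveI := FiniteDimensional.span_of_finite k ((Mon n m).finite_toSet.image
    (fun e => monomial e (1 : k)))
  exact Submodule.finiteDimensional_of_le hle

noncomputable def polyOf {s : ℕ} (d : Fin s → ℕ) (b : Idx n s d → k) :
    Fin s → MvPolynomial (Fin n) k :=
  fun i => ∑ e ∈ (Mon n (d i)).attach, monomial e.1 (b ⟨i, ⟨e.1, mem_Mon.mp e.2⟩⟩)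

theorem coeff_polyOf {s : ℕ} (d : Fin s → ℕ) (b : Idx n s d → k) (i : Fin s) (w : Fin n →₀ ℕ) :
    coeff w (polyOf d b i) = if h : degOf w = d i then b ⟨i, ⟨w, h⟩⟩ else 0 := by
  classical
  rw [polyOf, coeff_sum]
  split_ifs with h
  · rw [Finset.sum_eq_single (⟨w, mem_Mon.mpr h⟩ : {x // x ∈ Mon n (d i)})]
    · rw [coeff_monomial, if_pos rfl]
    · intro e _ hne
      rw [coeff_monomial, if_neg (fun he => hne (Subtype.ext he))]
    · intro hnot
      exact absurd (Finset.mem_attach _ _) hnot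
  · apply Finset.sum_eq_zero
    intro e _
    rw [coeff_monomial, if_neg]
    intro he
    exact h (he ▸ mem_Mon.mp e.2)

theorem coeffCond_polyOf {s : ℕ} (d : Fin s → ℕ) (b : Idx n s d → k) :
    CoeffCond d b (polyOf d b) := by
  intro i
  constructor
  · rintro ⟨w, hw⟩
    rw [coeff_polyOf, dif_pos hw]
  · intro w hw
    rw [coeff_polyOf, dif_neg hw]

theorem coeffCond_homog {s : ℕ} {d : Fin s → ℕ} {b : Idx n s d → k}
    {g : Fin s → MvPolynomial (Fin n) k} (h : CoeffCond d b g) (i : Fin s) :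
    g i ∈ homogeneousSubmodule (Fin n) k (d i) := by
  rw [mem_homog_iff]
  intro w hw
  by_contra hne
  exact hw ((h i).2 w hne)

def Rset {s : ℕ} (n : ℕ) (d : Fin s → ℕ) (m : ℕ) : Finset (Fin s × (Fin n →₀ ℕ)) :=
  (Finset.univ ×ˢ (Finset.range (m + 1)).biUnion (fun t => Mon n t)).filter
    (fun p => degOf p.2 + d p.1 = m)

theorem mem_Rset {s : ℕ} {d : Fin s → ℕ} {m : ℕ} {i : Fin s} {u : Fin n →₀ ℕ} :
    (i, u) ∈ Rset n d m ↔ degOf u + d i = m := by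
  constructor
  · intro h
    exact (Finset.mem_filter.mp h).2
  · intro h
    refine Finset.mem_filter.mpr ⟨Finset.mem_product.mpr ⟨Finset.mem_univ _, ?_⟩, h⟩
    exact Finset.mem_biUnion.mpr ⟨degOf u, Finset.mem_range.mpr (by omega), mem_Mon.mpr rfl⟩

noncomputable def gens {s : ℕ} (d : Fin s → ℕ) (g : Fin s → MvPolynomial (Fin n) k) (m : ℕ) :
    ↥(Rset n d m) → MvPolynomial (Fin n) k :=
  fun r => monomial r.1.2 (1 : k) * g r.1.1

theorem gens_mem {s : ℕ} {d : Fin s → ℕ} {g : Fin s → MvPolynomial (Fin n) k}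
    (hg : ∀ i, g i ∈ homogeneousSubmodule (Fin n) k (d i)) (m : ℕ) (r : ↥(Rset n d m)) :
    gens d g m r ∈ Submodule.restrictScalars k (Ideal.span (Set.range g)) ⊓
      homogeneousSubmodule (Fin n) k m := by
  refine Submodule.mem_inf.mpr ⟨?_, ?_⟩
  · rw [Submodule.restrictScalars_mem]
    exact Ideal.mul_mem_left _ _ (Ideal.subset_span ⟨r.1.1, rfl⟩)
  · have h1 : (monomial r.1.2 (1 : k)).IsHomogeneous (degOf r.1.2) :=
      isHomogeneous_monomial _ (degOf_eq_degree _).symm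
    have h2 := (mem_homogeneousSubmodule _ _).mp (hg r.1.1)
    have h3 := h1.mul h2
    have hr : degOf r.1.2 + d r.1.1 = m := (Finset.mem_filter.mp r.2).2
    rw [mem_homogeneousSubmodule]
    rwa [hr] at h3

theorem homogComp_mem_span {s : ℕ} {d : Fin s → ℕ} {g : Fin s → MvPolynomial (Fin n) k}
    (hg : ∀ i, g i ∈ homogeneousSubmodule (Fin n) k (d i))
    {p : MvPolynomial (Fin n) k} (hp : p ∈ Ideal.span (Set.range g)) (m : ℕ) :
    homogeneousComponent m p ∈ Submodule.span k (Set.range (gens d g m)) := by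
  classical
  obtain ⟨c, rfl⟩ := Ideal.mem_span_range_iff_exists_fun.mp hp
  rw [map_sum]
  refine Submodule.sum_mem _ fun i _ => ?_
  have hrep : c i * g i = ∑ u ∈ (c i).support, (coeff u (c i)) • (monomial u (1 : k) * g i) := by
    conv_lhs => rw [(c i).as_sum]
    rw [Finset.sum_mul]
    refine Finset.sum_congr rfl fun u _ => ?_
    rw [← smul_mul_assoc, smul_monomial, smul_eq_mul, mul_one]
  rw [hrep, map_sum]
  refine Submodule.sum_mem _ fun u _ => ?_
  rw [LinearMap.map_smul]
  refine Submodule.smul_mem _ _ ?_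
  have hmem : monomial u (1 : k) * g i ∈ homogeneousSubmodule (Fin n) k (degOf u + d i) := by
    rw [mem_homogeneousSubmodule]
    exact (isHomogeneous_monomial _ (degOf_eq_degree u).symm).mul
      ((mem_homogeneousSubmodule _ _).mp (hg i))
  rw [homogeneousComponent_of_mem hmem]
  split_ifs with h
  · exact Submodule.subset_span ⟨⟨(i, u), mem_Rset.mpr h.symm⟩, rfl⟩
  · exact Submodule.zero_mem _

theorem span_gens_le {s : ℕ} (d : Fin s → ℕ) (g : Fin s → MvPolynomial (Fin n) k)
    (hg : ∀ i, g i ∈ homogeneousSubmodule (Fin n) k (d i)) (m : ℕ) :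
    Submodule.span k (Set.range (gens d g m)) ≤
      Submodule.restrictScalars k (Ideal.span (Set.range g)) ⊓
        homogeneousSubmodule (Fin n) k m :=
  Submodule.span_le.mpr (by rintro _ ⟨r, rfl⟩; exact gens_mem hg m r)

theorem exists_homog_lead {s : ℕ} {d : Fin s → ℕ} {g : Fin s → MvPolynomial (Fin n) k}
    (hg : ∀ i, g i ∈ homogeneousSubmodule (Fin n) k (d i)) {v : Fin n →₀ ℕ} {m : ℕ}
    (hdeg : degOf v = m)
    (hv : monomial v (1 : k) ∈ initialIdeal lexLE (Ideal.span (Set.range g))) :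
    ∃ p, p ∈ Ideal.span (Set.range g) ∧ p ∈ homogeneousSubmodule (Fin n) k m ∧
      IsLeadExp lexLE p v := by
  classical
  set I := Ideal.span (Set.range g) with hI
  have hseteq : {p | ∃ f ∈ I, ∃ e, IsLeadExp lexLE f e ∧ p = monomial e (1 : k)} =
      (fun e => monomial e (1 : k)) '' {e | ∃ f ∈ I, IsLeadExp lexLE f e} := by
    ext q
    constructor
    · rintro ⟨f, hf, e, hle, rfl⟩
      exact ⟨e, ⟨f, hf, hle⟩, rfl⟩
    · rintro ⟨e, ⟨f, hf, hle⟩, rfl⟩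
      exact ⟨f, hf, e, hle, rfl⟩
  rw [initialIdeal, hseteq] at hv
  have hv' := mem_ideal_span_monomial_image.mp hv v (by
    rw [support_monomial, if_neg one_ne_zero]
    exact Finset.mem_singleton_self v)
  obtain ⟨e, ⟨f, hf, hlead⟩, hle⟩ := hv'
  set t := v - e with ht
  have het : e + t = v := add_tsub_cancel_of_le hle
  set g' := homogeneousComponent (degOf e) f with hg'
  have hg'span := homogComp_mem_span hg hf (degOf e)
  have hg'I : g' ∈ I := by
    have hmem := span_gens_le d g hg (degOf e) hg'span
    exact (Submodule.restrictScalars_mem _ _ _).mp (Submodule.mem_inf.mp hmem).1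
  have hsupp_sub : g'.support ⊆ f.support := by
    intro w hw
    rw [mem_support_iff] at hw ⊢
    rw [hg', coeff_homogeneousComponent] at hw
    split_ifs at hw
    · exact hw
    · exact absurd rfl hw
  have he_supp : e ∈ g'.support := by
    rw [mem_support_iff, hg', coeff_homogeneousComponent,
      if_pos (by rw [← degOf_eq_degree])]
    exact mem_support_iff.mp hlead.1
  have hleadg' : IsLeadExp lexLE g' e := ⟨he_supp, fun w hw => hlead.2 w (hsupp_sub hw)⟩
  refine ⟨g' * monomial t (1 : k), Ideal.mul_mem_right _ _ hg'I, ?_, ?_⟩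
  · rw [mem_homogeneousSubmodule]
    have hmul := (homogeneousComponent_isHomogeneous (degOf e) f).mul
      (isHomogeneous_monomial (1 : k) (degOf_eq_degree t).symm)
    have heq : degOf e + degOf t = m := by rw [← degOf_add, het, hdeg]
    rwa [heq] at hmul
  · constructor
    · have hts : t ≤ v := by rw [ht]; exact tsub_le_self
      rw [mem_support_iff, coeff_mul_monomial', if_pos hts]
      have hvt : v - t = e := by rw [← het]; ext i; simp
      rw [hvt, mul_one]
      exact mem_support_iff.mp he_supp
    · intro w hw
      rw [mem_support_iff, coeff_mul_monomial'] at hw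
      by_cases hlew : t ≤ w
      · rw [if_pos hlew, mul_one] at hw
        have hwt : w - t ∈ g'.support := mem_support_iff.mpr hw
        have h2 := lexLE_add_right (hleadg'.2 _ hwt) t
        rwa [tsub_add_cancel_of_le hlew, het] at h2
      · rw [if_neg hlew] at hw
        exact absurd rfl hw

end StmtAux

open StmtAux in
set_option maxHeartbeats 2000000 in
theorem stmt19 {k : Type*} [Field k] [Infinite k] (n s : ℕ) (d : Fin s → ℕ)
    (FU FV : MvPolynomial (Idx n s d) k) (J : Ideal (MvPolynomial (Fin n) k))
    (hFU : FU ≠ 0) (hFV : FV ≠ 0)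
    (hU : ∀ (a : Idx n s d → k) (f : Fin s → MvPolynomial (Fin n) k),
      CoeffCond d a f → MvPolynomial.eval a FU ≠ 0 →
      ∀ (b : Idx n s d → k) (g : Fin s → MvPolynomial (Fin n) k), CoeffCond d b g →
        ∀ m : ℕ, HF (Ideal.span (Set.range f)) m ≤ HF (Ideal.span (Set.range g)) m)
    (hV : ∀ (a : Idx n s d → k) (f : Fin s → MvPolynomial (Fin n) k),
      CoeffCond d a f → MvPolynomial.eval a FV ≠ 0 →
        initialIdeal lexLE (Ideal.span (Set.range f)) = J)
    (hex : ∃ (a : Idx n s d → k) (f : Fin s → MvPolynomial (Fin n) k),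
      CoeffCond d a f ∧ MvPolynomial.eval a FU ≠ 0 ∧
        IsLexsegment (initialIdeal lexLE (Ideal.span (Set.range f)))) :
    IsLexsegment J := by
  classical
  intro e he e' hdeg' hlex
  obtain ⟨a, fa, hCa, hFUa, hLexa⟩ := hex
  set Ia : Ideal (MvPolynomial (Fin n) k) := Ideal.span (Set.range fa) with hIa
  set m := degOf e with hm
  have hfa_hom : ∀ i, fa i ∈ homogeneousSubmodule (Fin n) k (d i) := coeffCond_homog hCa
  set LSet : Finset (Fin n →₀ ℕ) :=
    (Mon n m).filter (fun v => monomial v (1 : k) ∈ initialIdeal lexLE Ia) with hLSet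
  have mem_LSet : ∀ {v : Fin n →₀ ℕ}, v ∈ LSet ↔
      degOf v = m ∧ monomial v (1 : k) ∈ initialIdeal lexLE Ia := by
    intro v
    rw [hLSet, Finset.mem_filter, mem_Mon]
  have LSet_up : ∀ v ∈ LSet, ∀ w, degOf w = m → lexLE v w → w ∈ LSet := by
    intro v hv w hdw hlw
    refine mem_LSet.mpr ⟨hdw, ?_⟩
    exact hLexa v (mem_LSet.mp hv).2 w (by rw [hdw, (mem_LSet.mp hv).1]) hlw
  have hpv0 : ∀ v : {x // x ∈ LSet}, ∃ p, p ∈ Ia ∧ p ∈ homogeneousSubmodule (Fin n) k m ∧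
      IsLeadExp lexLE p v.1 :=
    fun v => exists_homog_lead hfa_hom (mem_LSet.mp v.2).1 (mem_LSet.mp v.2).2
  choose pv hpvI hpvH hpvL using hpv0
  have hpv_span : ∀ v, pv v ∈ Submodule.span k (Set.range (gens d fa m)) := by
    intro v
    have h1 := homogComp_mem_span hfa_hom (hpvI v) m
    rwa [homogeneousComponent_of_mem (hpvH v), if_pos rfl] at h1
  have hΛ0 : ∀ v, ∃ Λv : {r // r ∈ Rset n d m} → k,
      ∑ r, Λv r • gens d fa m r = pv v :=
    fun v => (Submodule.mem_span_range_iff_exists_fun k).mp (hpv_span v)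
  choose Λ hΛ using hΛ0
  set Csym : {r // r ∈ Rset n d m} → {x // x ∈ LSet} → MvPolynomial (Idx n s d) k :=
    fun r w =>
      if h : r.1.2 ≤ w.1 ∧ degOf (w.1 - r.1.2) = d r.1.1 then
        X ⟨r.1.1, ⟨w.1 - r.1.2, h.2⟩⟩ else 0 with hCsym
  have hCsym_eval : ∀ (b : Idx n s d → k) (g : Fin s → MvPolynomial (Fin n) k),
      CoeffCond d b g → ∀ r w, eval b (Csym r w) = coeff w.1 (gens d g m r) := by
    intro b g hg r w
    have hR : gens d g m r = g r.1.1 * monomial r.1.2 (1 : k) := mul_comm _ _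
    rw [hR, coeff_mul_monomial']
    simp only [hCsym]
    by_cases hle : r.1.2 ≤ w.1
    · rw [if_pos hle]
      by_cases hdg : degOf (w.1 - r.1.2) = d r.1.1
      · rw [dif_pos ⟨hle, hdg⟩, mul_one]
        exact (eval_X (f := b) _).trans ((hg r.1.1).1 ⟨w.1 - r.1.2, hdg⟩).symm
      · rw [dif_neg (fun hc => hdg hc.2), map_zero, (hg r.1.1).2 _ hdg, zero_mul]
    · rw [if_neg hle, dif_neg (fun hc => hle hc.1), map_zero]
  set P : Matrix {x // x ∈ LSet} {x // x ∈ LSet} (MvPolynomial (Idx n s d) k) :=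
    Matrix.of (fun v w => ∑ r, MvPolynomial.C (Λ v r) * Csym r w) with hP
  have hPeval : ∀ (b : Idx n s d → k) (g : Fin s → MvPolynomial (Fin n) k), CoeffCond d b g →
      ∀ v w, eval b (P v w) = coeff w.1 (∑ r, Λ v r • gens d g m r) := by
    intro b g hg v w
    rw [hP]
    show eval b (∑ r, MvPolynomial.C (Λ v r) * Csym r w) = _
    rw [map_sum, coeff_sum]
    refine Finset.sum_congr rfl fun r _ => ?_
    rw [map_mul, eval_C, hCsym_eval b g hg r w, coeff_smul, smul_eq_mul]
  set Ma : Matrix {x // x ∈ LSet} {x // x ∈ LSet} k :=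
    Matrix.of (fun v w => coeff w.1 (pv v)) with hMa
  have hPa : ∀ v w, eval a (P v w) = Ma v w := by
    intro v w
    rw [hPeval a fa hCa v w, hΛ v]
    rfl
  have rho_zero : ∀ z, z ∈ Ia → z ∈ homogeneousSubmodule (Fin n) k m →
      (∀ w : {x // x ∈ LSet}, coeff w.1 z = 0) → z = 0 := by
    intro z hzI hzH hz0
    by_contra hz
    obtain ⟨ℓ, hℓmem, hℓmax⟩ := exists_lex_max z.support
      (Finset.nonempty_iff_ne_empty.mpr (fun hsup => hz (support_eq_empty.mp hsup)))
    have hdegℓ : degOf ℓ = m := mem_homog_iff.mp hzH ℓ (mem_support_iff.mp hℓmem)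
    have hℓL : ℓ ∈ LSet := mem_LSet.mpr ⟨hdegℓ,
      Ideal.subset_span ⟨z, hzI, ℓ, ⟨hℓmem, hℓmax⟩, rfl⟩⟩
    exact mem_support_iff.mp hℓmem (hz0 ⟨ℓ, hℓL⟩)
  have hMarows : LinearIndependent k (fun v : {x // x ∈ LSet} => Ma v) := by
    rw [Fintype.linearIndependent_iff]
    intro c hc v
    by_contra hcv
    set z : MvPolynomial (Fin n) k := ∑ v, c v • pv v with hz
    have hzI : z ∈ Ia := by
      rw [hz]
      exact Submodule.sum_mem (Submodule.restrictScalars k Ia)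
        (fun v _ => Submodule.smul_mem _ _ (hpvI v))
    have hzH : z ∈ homogeneousSubmodule (Fin n) k m := by
      rw [hz]
      exact Submodule.sum_mem _ fun v _ => Submodule.smul_mem _ _ (hpvH v)
    have hz0 : ∀ w : {x // x ∈ LSet}, coeff w.1 z = 0 := by
      intro w
      have hcw := congrFun hc w
      rw [Finset.sum_apply] at hcw
      rw [hz, coeff_sum]
      simp only [coeff_smul, smul_eq_mul]
      simpa [hMa] using hcw
    have hzz := rho_zero z hzI hzH hz0
    set S : Finset {x // x ∈ LSet} := Finset.univ.filter (fun v => c v ≠ 0) with hS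
    have hSne : S.Nonempty := ⟨v, by simp [hS, hcv]⟩
    obtain ⟨e0, he0S, he0max⟩ := exists_lex_max (S.image (fun v => v.1)) (hSne.image _)
    obtain ⟨v0, hv0S, hv0e⟩ := Finset.mem_image.mp he0S
    have hcv0 : c v0 ≠ 0 := (Finset.mem_filter.mp hv0S).2
    have hmax' : ∀ u ∈ S, lexLE u.1 v0.1 := by
      intro u hu
      rw [hv0e]
      exact he0max u.1 (Finset.mem_image.mpr ⟨u, hu, rfl⟩)
    have hcoeff : coeff v0.1 z = c v0 * coeff v0.1 (pv v0) := by
      rw [hz, coeff_sum]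
      simp only [coeff_smul, smul_eq_mul]
      refine Finset.sum_eq_single v0 ?_ ?_
      · intro u _ hne
        by_cases hcu : c u = 0
        · rw [hcu, zero_mul]
        · have huS : u ∈ S := by simp [hS, hcu]
          have hle := hmax' u huS
          have hco : coeff v0.1 (pv u) = 0 := by
            by_contra h0
            have hsup := mem_support_iff.mpr h0
            have h2 := (hpvL u).2 _ hsup
            have heq := lexLE_antisymm h2 hle
            exact hne (Subtype.ext heq.symm)
          rw [hco, mul_zero]
      · intro hnot
        exact absurd (Finset.mem_univ v0) hnot
    rw [hzz, coeff_zero] at hcoeff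
    rcases mul_eq_zero.mp hcoeff.symm with h | h
    · exact hcv0 h
    · exact mem_support_iff.mp (hpvL v0).1 h
  have hMaUnit : IsUnit Ma := Matrix.linearIndependent_rows_iff_isUnit.mp hMarows
  have hMaDet : Ma.det ≠ 0 := ((Matrix.isUnit_iff_isUnit_det Ma).mp hMaUnit).ne_zero
  set G : MvPolynomial (Idx n s d) k := P.det with hG
  have hGa : eval a G = Ma.det := by
    rw [hG, RingHom.map_det, RingHom.mapMatrix_apply]
    have hPM : P.map (eval a) = Ma := by
      ext v w
      exact hPa v w
    rw [hPM]
  have hGne : G ≠ 0 := fun h => hMaDet (by rw [← hGa, h, map_zero])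
  have hprod : FU * (FV * G) ≠ 0 := mul_ne_zero hFU (mul_ne_zero hFV hGne)
  obtain ⟨cp, hcp⟩ : ∃ cp : Idx n s d → k, eval cp (FU * (FV * G)) ≠ 0 := by
    by_contra hcon
    push_neg at hcon
    exact hprod (MvPolynomial.funext fun x => by rw [hcon x, map_zero])
  rw [map_mul, map_mul] at hcp
  obtain ⟨hFUc, hFVc, hGc⟩ : eval cp FU ≠ 0 ∧ eval cp FV ≠ 0 ∧ eval cp G ≠ 0 := by
    refine ⟨fun h => hcp ?_, fun h => hcp ?_, fun h => hcp ?_⟩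
    · rw [h, zero_mul]
    · rw [h, zero_mul, mul_zero]
    · rw [h, mul_zero, mul_zero]
  set fc := polyOf d cp with hfc
  have hCc : CoeffCond d cp fc := coeffCond_polyOf d cp
  have hfc_hom : ∀ i, fc i ∈ homogeneousSubmodule (Fin n) k (d i) := coeffCond_homog hCc
  set Ic : Ideal (MvPolynomial (Fin n) k) := Ideal.span (Set.range fc) with hIc
  have hJ : initialIdeal lexLE Ic = J := hV cp fc hCc hFVc
  have hHF : HF Ia m = HF Ic m :=
    le_antisymm (hU a fa hCa hFUa cp fc hCc m) (hU cp fc hCc hFUc a fa hCa m)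
  have hQ : ∀ I : Ideal (MvPolynomial (Fin n) k),
      HF I m + Module.finrank k
        ↥(Submodule.restrictScalars k I ⊓ homogeneousSubmodule (Fin n) k m)
        = Module.finrank k ↥(homogeneousSubmodule (Fin n) k m) := by
    intro I
    have h1 : Submodule.comap (homogeneousSubmodule (Fin n) k m).subtype
        (Submodule.restrictScalars k I) =
        Submodule.comap (homogeneousSubmodule (Fin n) k m).subtype
          (Submodule.restrictScalars k I ⊓ homogeneousSubmodule (Fin n) k m) := by
      rw [Submodule.comap_inf, Submodule.comap_subtype_self, inf_top_eq]
    have h2 := Submodule.finrank_quotient_add_finrank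
      (Submodule.comap (homogeneousSubmodule (Fin n) k m).subtype
        (Submodule.restrictScalars k I))
    have h3 : Module.finrank k ↥(Submodule.comap (homogeneousSubmodule (Fin n) k m).subtype
        (Submodule.restrictScalars k I)) = Module.finrank k
        ↥(Submodule.restrictScalars k I ⊓ homogeneousSubmodule (Fin n) k m) := by
      rw [h1]
      exact (Submodule.comapSubtypeEquivOfLe inf_le_right).finrank_eq
    unfold HF
    rw [← h3]
    exact h2
  have hdimW : Module.finrank k
      ↥(Submodule.restrictScalars k Ia ⊓ homogeneousSubmodule (Fin n) k m)
      = Module.finrank k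
      ↥(Submodule.restrictScalars k Ic ⊓ homogeneousSubmodule (Fin n) k m) := by
    have ha' := hQ Ia
    have hc' := hQ Ic
    rw [hHF] at ha'
    omega
  set Mc : Matrix {x // x ∈ LSet} {x // x ∈ LSet} k := P.map (eval cp) with hMc
  have hMcd : IsUnit Mc.det := by
    have h1 : Mc.det = eval cp G := by
      rw [hG, RingHom.map_det, RingHom.mapMatrix_apply, hMc]
    rw [h1]
    exact isUnit_iff_ne_zero.mpr hGc
  set qv : {x // x ∈ LSet} → MvPolynomial (Fin n) k :=
    fun v => ∑ r, Λ v r • gens d fc m r with hqv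
  have hMcq : ∀ v w, Mc v w = coeff w.1 (qv v) := by
    intro v w
    rw [hMc, Matrix.map_apply]
    exact hPeval cp fc hCc v w
  have hqvW : ∀ v, qv v ∈ Submodule.restrictScalars k Ic ⊓ homogeneousSubmodule (Fin n) k m := by
    intro v
    rw [hqv]
    exact Submodule.sum_mem _ fun r _ => Submodule.smul_mem _ _ (gens_mem hfc_hom m r)
  have solver : ∀ (M : Matrix {x // x ∈ LSet} {x // x ∈ LSet} k), IsUnit M.det →
      ∀ (q : {x // x ∈ LSet} → MvPolynomial (Fin n) k)
        (W : Submodule k (MvPolynomial (Fin n) k)),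
      (∀ v, q v ∈ W) → (∀ v w, M v w = coeff w.1 (q v)) →
      ∀ y : {x // x ∈ LSet} → k, ∃ z ∈ W, ∀ w : {x // x ∈ LSet}, coeff w.1 z = y w := by
    intro M hMdet q W hqW hMq y
    refine ⟨∑ v, (Matrix.vecMul y M⁻¹) v • q v,
      Submodule.sum_mem _ fun v _ => Submodule.smul_mem _ _ (hqW v), ?_⟩
    intro w
    rw [coeff_sum]
    simp only [coeff_smul, smul_eq_mul]
    have h1 : ∑ v, (Matrix.vecMul y M⁻¹) v * coeff w.1 (q v)
        = Matrix.vecMul (Matrix.vecMul y M⁻¹) M w := by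
      simp only [Matrix.vecMul, dotProduct]
      exact Finset.sum_congr rfl fun v _ => by rw [hMq v w]
    rw [h1, Matrix.vecMul_vecMul, Matrix.nonsing_inv_mul M hMdet, Matrix.vecMul_one]
  set Wc : Submodule k (MvPolynomial (Fin n) k) :=
    Submodule.restrictScalars k Ic ⊓ homogeneousSubmodule (Fin n) k m with hWc
  set Wa : Submodule k (MvPolynomial (Fin n) k) :=
    Submodule.restrictScalars k Ia ⊓ homogeneousSubmodule (Fin n) k m with hWa
  haveI : FiniteDimensional k ↥Wc := Submodule.finiteDimensional_of_le inf_le_right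
  haveI : FiniteDimensional k ↥Wa := Submodule.finiteDimensional_of_le inf_le_right
  set ρc : ↥Wc →ₗ[k] ({x // x ∈ LSet} → k) :=
    (LinearMap.pi (fun w : {x // x ∈ LSet} => MvPolynomial.lcoeff k w.1)).comp Wc.subtype
    with hρc
  set ρa : ↥Wa →ₗ[k] ({x // x ∈ LSet} → k) :=
    (LinearMap.pi (fun w : {x // x ∈ LSet} => MvPolynomial.lcoeff k w.1)).comp Wa.subtype
    with hρa
  have hρc_apply : ∀ (z : ↥Wc) (w : {x // x ∈ LSet}), ρc z w = coeff w.1 z.1 :=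
    fun z w => rfl
  have hρa_apply : ∀ (z : ↥Wa) (w : {x // x ∈ LSet}), ρa z w = coeff w.1 z.1 :=
    fun z w => rfl
  have hpvW : ∀ v, pv v ∈ Wa := fun v => Submodule.mem_inf.mpr ⟨hpvI v, hpvH v⟩
  have hsurja : Function.Surjective ρa := by
    intro y
    obtain ⟨z, hzW, hzc⟩ := solver Ma ((Matrix.isUnit_iff_isUnit_det Ma).mp hMaUnit) pv Wa hpvW
      (fun v w => rfl) y
    exact ⟨⟨z, hzW⟩, funext fun w => hzc w⟩
  have hinja : Function.Injective ρa := by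
    rw [← LinearMap.ker_eq_bot, LinearMap.ker_eq_bot']
    intro z hz
    have hmem := Submodule.mem_inf.mp z.2
    have hz1 : z.1 = 0 := by
      refine rho_zero z.1 hmem.1 hmem.2 fun w => ?_
      have := congrFun hz w
      rwa [hρa_apply z w] at this
    exact Subtype.ext hz1
  have hranka : Module.finrank k ↥Wa = Module.finrank k ({x // x ∈ LSet} → k) :=
    (LinearEquiv.ofBijective ρa ⟨hinja, hsurja⟩).finrank_eq
  have hrankc : Module.finrank k ↥Wc = Module.finrank k ({x // x ∈ LSet} → k) := by
    rw [← hranka]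
    exact hdimW.symm
  have hsurjc : Function.Surjective ρc := by
    intro y
    obtain ⟨z, hzW, hzc⟩ := solver Mc hMcd qv Wc hqvW hMcq y
    exact ⟨⟨z, hzW⟩, funext fun w => hzc w⟩
  have hinjc : Function.Injective ρc := by
    have h1 := LinearMap.finrank_range_add_finrank_ker ρc
    rw [LinearMap.range_eq_top.mpr hsurjc, finrank_top] at h1
    have hker : Module.finrank k ↥(LinearMap.ker ρc) = 0 := by omega
    rw [← LinearMap.ker_eq_bot]
    exact Submodule.finrank_eq_zero.mp hker
  have heJ : monomial e (1 : k) ∈ initialIdeal lexLE Ic := by rw [hJ]; exact he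
  obtain ⟨p, hpI, hpH, hpL⟩ := exists_homog_lead hfc_hom hm.symm heJ
  have hpW : p ∈ Wc := Submodule.mem_inf.mpr ⟨hpI, hpH⟩
  have heL : e ∈ LSet := by
    by_contra heL
    have hz0 : ∀ w : {x // x ∈ LSet}, coeff w.1 p = 0 := by
      intro w
      by_contra h0
      have hsup := mem_support_iff.mpr h0
      have hlw := hpL.2 w.1 hsup
      exact heL (LSet_up w.1 w.2 e hm.symm hlw)
    have hzz : (⟨p, hpW⟩ : ↥Wc) = 0 := by
      apply hinjc
      funext w
      show coeff w.1 p = (0 : {x // x ∈ LSet} → k) w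
      rw [Pi.zero_apply]
      exact hz0 w
    have hp0 : p = 0 := congrArg Subtype.val hzz
    rw [hp0] at hpL
    simpa using hpL.1
  have he'L : e' ∈ LSet := LSet_up e heL e' (hdeg'.trans hm.symm) hlex
  obtain ⟨z, hzW, hzc⟩ := solver Mc hMcd qv Wc hqvW hMcq (Pi.single ⟨e', he'L⟩ 1)
  have hzI : z ∈ Ic := (Submodule.mem_inf.mp hzW).1
  have hzH : z ∈ homogeneousSubmodule (Fin n) k m := (Submodule.mem_inf.mp hzW).2
  have hze' : coeff e' z = 1 := by
    have := hzc ⟨e', he'L⟩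
    rwa [Pi.single_eq_same] at this
  have hlead : IsLeadExp lexLE z e' := by
    constructor
    · rw [mem_support_iff, hze']
      exact one_ne_zero
    · intro w hw
      rcases lexLE_total w e' with h | h
      · exact h
      · have hdw : degOf w = m := mem_homog_iff.mp hzH w (mem_support_iff.mp hw)
        have hwL : w ∈ LSet := LSet_up e' he'L w hdw h
        by_cases hwe : w = e'
        · rw [hwe]
          exact lexLE_refl e'
        · exfalso
          have hcw := hzc ⟨w, hwL⟩
          rw [Pi.single_eq_of_ne (fun hh => hwe (congrArg Subtype.val hh))] at hcw
          exact mem_support_iff.mp hw hcw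
  rw [← hJ]
  exact Ideal.subset_span ⟨z, hzI, e', hlead, rfl⟩
end
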